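/- For y ∈ ℝ^m, the following are equivalent: (i) P(y) = 0 for every real polynomial P in m variables vanishing identically on Y₀ (i.e., y lies in the real Zariski closure Y of Y₀); (ii) there exists v ∈ ℂ^d with p_ℂ(v) = y. In other words, Y = Y_ℂ ∩ ℝ^m where Y_ℂ = p_ℂ(ℂ^d). -/

import Mathlib

open Matrix MvPolynomial

noncomputable section

/-- Action of an invertible real matrix on a vector in `ℝ^d`. -/
def act {d : ℕ} (g : GL (Fin d) ℝ) (v : Fin d → ℝ) : Fin d → ℝ :=
  (g : Matrix (Fin d) (Fin d) ℝ).mulVec v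

/-- Orbit of a vector under a subgroup of `GL (Fin d) ℝ`. -/
def orbitOf {d : ℕ} (G : Subgroup (GL (Fin d) ℝ)) (v : Fin d → ℝ) : Set (Fin d → ℝ) :=
  {x | ∃ g ∈ G, act g v = x}

/-- A quasi-isomorphism: a linear isomorphism sending `G`-orbits to `H`-orbits,
whose inverse sends `H`-orbits to `G`-orbits. -/
def IsQuasiIso {d e : ℕ} (G : Subgroup (GL (Fin d) ℝ)) (H : Subgroup (GL (Fin e) ℝ))
    (L : (Fin d → ℝ) ≃ₗ[ℝ] (Fin e → ℝ)) : Prop :=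
  (∀ v : Fin d → ℝ, ∃ w : Fin e → ℝ, ⇑L '' orbitOf G v = orbitOf H w) ∧
  (∀ w : Fin e → ℝ, ∃ v : Fin d → ℝ, ⇑L.symm '' orbitOf H w = orbitOf G v)

/-- `P` is a `G`-invariant polynomial. -/
def IsInv {d : ℕ} (G : Subgroup (GL (Fin d) ℝ)) (P : MvPolynomial (Fin d) ℝ) : Prop :=
  ∀ g ∈ G, ∀ v : Fin d → ℝ, eval (act g v) P = eval v P

/-- The polynomial map `ℝ^d → ℝ^m` given by a family of polynomials. -/
def evalMap {d m : ℕ} (p : Fin m → MvPolynomial (Fin d) ℝ) (v : Fin d → ℝ) : Fin m → ℝ :=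
  fun i => eval v (p i)

/-- Real Zariski closure of a subset of `ℝ^m`: the common zero set of all real
polynomials vanishing identically on `S`. -/
def zarClosure {m : ℕ} (S : Set (Fin m → ℝ)) : Set (Fin m → ℝ) :=
  {y | ∀ P : MvPolynomial (Fin m) ℝ, (∀ s ∈ S, eval s P = 0) → eval y P = 0}

/-- `G` contains no reflections: every nonidentity element `g` has `rank (g - 1) ≥ 2`. -/
def NoReflections {d : ℕ} (G : Subgroup (GL (Fin d) ℝ)) : Prop :=
  ∀ g ∈ G, g ≠ 1 → 2 ≤ ((g : Matrix (Fin d) (Fin d) ℝ) - 1).rank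

/-- Action of an invertible real matrix on a vector in `ℂ^d` (complexified action). -/
def actC {d : ℕ} (g : GL (Fin d) ℝ) (v : Fin d → ℂ) : Fin d → ℂ :=
  ((g : Matrix (Fin d) (Fin d) ℝ).map (algebraMap ℝ ℂ)).mulVec v

/-- The complexification `p_ℂ : ℂ^d → ℂ^m` of the real polynomial map given by `p`. -/
def pC {d m : ℕ} (p : Fin m → MvPolynomial (Fin d) ℝ) (v : Fin d → ℂ) : Fin m → ℂ :=
  fun i => eval v ((p i).map (algebraMap ℝ ℂ))

/-! ### Auxiliary material for `stmt_15` -/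

section Stmt15Aux

lemma eval_bind' {σ τ R : Type*} [CommSemiring R] (v : τ → R) (f : σ → MvPolynomial τ R)
    (φ : MvPolynomial σ R) : eval v (bind₁ f φ) = eval (fun j => eval v (f j)) φ := by
  have h := aeval_bind₁ (S := R) v f φ
  simpa [aeval_def, Algebra.algebraMap_self] using h

lemma eval_map_real {σ : Type*} (v : σ → ℝ) (q : MvPolynomial σ ℝ) :
    eval (fun j => ((v j : ℝ) : ℂ)) (q.map (algebraMap ℝ ℂ)) = ((eval v q : ℝ) : ℂ) := by
  rw [MvPolynomial.eval_map]
  have h := eval₂_comp_left (algebraMap ℝ ℂ) (RingHom.id ℝ) v q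
  simp only [RingHomCompTriple.comp_eq] at h
  rw [show (fun j => ((v j : ℝ) : ℂ)) = ⇑(algebraMap ℝ ℂ) ∘ v from rfl, ← h]
  rfl

/-- Substitution by a real invertible matrix on real polynomials. -/
def sR {d : ℕ} (g : GL (Fin d) ℝ) : MvPolynomial (Fin d) ℝ →ₐ[ℝ] MvPolynomial (Fin d) ℝ :=
  bind₁ fun j => ∑ k, C ((g : Matrix (Fin d) (Fin d) ℝ) j k) * X k

/-- Substitution by a real invertible matrix on complex polynomials. -/
def sC {d : ℕ} (g : GL (Fin d) ℝ) : MvPolynomial (Fin d) ℂ →ₐ[ℂ] MvPolynomial (Fin d) ℂ :=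
  bind₁ fun j => ∑ k, C (((g : Matrix (Fin d) (Fin d) ℝ) j k : ℝ) : ℂ) * X k

lemma eval_sR {d : ℕ} (g : GL (Fin d) ℝ) (v : Fin d → ℝ) (Q : MvPolynomial (Fin d) ℝ) :
    eval v (sR g Q) = eval (act g v) Q := by
  rw [sR]
  show eval v (bind₁ _ Q) = _
  rw [eval_bind']
  have hfun : (fun j => eval v (∑ k, C ((g : Matrix (Fin d) (Fin d) ℝ) j k) * X k)) = act g v := by
    funext j; simp [act, Matrix.mulVec, dotProduct]
  rw [hfun]

lemma eval_sC {d : ℕ} (g : GL (Fin d) ℝ) (v : Fin d → ℂ) (Q : MvPolynomial (Fin d) ℂ) :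
    eval v (sC g Q) = eval (actC g v) Q := by
  rw [sC]
  show eval v (bind₁ _ Q) = _
  rw [eval_bind']
  have hfun : (fun j => eval v (∑ k, C (((g : Matrix (Fin d) (Fin d) ℝ) j k : ℝ) : ℂ) * X k))
      = actC g v := by
    funext j; simp [actC, Matrix.mulVec, dotProduct]
  rw [hfun]

lemma actC_comp {d : ℕ} (g h : GL (Fin d) ℝ) (v : Fin d → ℂ) :
    actC g (actC h v) = actC (g * h) v := by
  unfold actC
  rw [mulVec_mulVec, ← Matrix.map_mul, ← Units.val_mul]

lemma sC_comp {d : ℕ} (g h : GL (Fin d) ℝ) (Q : MvPolynomial (Fin d) ℂ) :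
    sC h (sC g Q) = sC (g * h) Q := by
  apply MvPolynomial.funext
  intro v
  rw [eval_sC, eval_sC, eval_sC, actC_comp]

lemma map_sR {d : ℕ} (g : GL (Fin d) ℝ) (Q : MvPolynomial (Fin d) ℝ) :
    (sR g Q).map (algebraMap ℝ ℂ) = sC g (Q.map (algebraMap ℝ ℂ)) := by
  rw [sR, sC]
  show MvPolynomial.map _ (bind₁ _ Q) = bind₁ _ _
  rw [MvPolynomial.map_bind₁]
  have hfun : (fun i => MvPolynomial.map (algebraMap ℝ ℂ)
        (∑ k, C ((g : Matrix (Fin d) (Fin d) ℝ) i k) * X k))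
      = fun j => ∑ k, C (((g : Matrix (Fin d) (Fin d) ℝ) j k : ℝ) : ℂ) * X k := by
    funext j; simp
  rw [hfun]

/-- Real part of a complex polynomial, coefficientwise. -/
def reP {σ : Type*} (Q : MvPolynomial σ ℂ) : MvPolynomial σ ℝ :=
  ∑ s ∈ Q.support, monomial s (Q.coeff s).re

/-- Imaginary part of a complex polynomial, coefficientwise. -/
def imP {σ : Type*} (Q : MvPolynomial σ ℂ) : MvPolynomial σ ℝ :=
  ∑ s ∈ Q.support, monomial s (Q.coeff s).im

lemma coeff_reP {σ : Type*} (Q : MvPolynomial σ ℂ) (s : σ →₀ ℕ) :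
    (reP Q).coeff s = (Q.coeff s).re := by
  classical
  rw [reP, coeff_sum]
  rw [Finset.sum_congr rfl (fun t _ => coeff_monomial s t ((MvPolynomial.coeff t Q).re))]
  rw [Finset.sum_ite_eq' Q.support s fun t => (MvPolynomial.coeff t Q).re]
  by_cases h : s ∈ Q.support
  · simp [h]
  · simp [h, notMem_support_iff.1 h]

lemma coeff_imP {σ : Type*} (Q : MvPolynomial σ ℂ) (s : σ →₀ ℕ) :
    (imP Q).coeff s = (Q.coeff s).im := by
  classical
  rw [imP, coeff_sum]
  rw [Finset.sum_congr rfl (fun t _ => coeff_monomial s t ((MvPolynomial.coeff t Q).im))]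
  rw [Finset.sum_ite_eq' Q.support s fun t => (MvPolynomial.coeff t Q).im]
  by_cases h : s ∈ Q.support
  · simp [h]
  · simp [h, notMem_support_iff.1 h]

lemma decompP {σ : Type*} (Q : MvPolynomial σ ℂ) :
    Q = (reP Q).map (algebraMap ℝ ℂ) + C Complex.I * (imP Q).map (algebraMap ℝ ℂ) := by
  apply MvPolynomial.ext
  intro s
  simp only [coeff_add, coeff_map, coeff_C_mul, coeff_reP, coeff_imP]
  simp [Complex.ext_iff]

lemma decomp_unique {σ : Type*} {A B A' B' : MvPolynomial σ ℝ}
    (h : A.map (algebraMap ℝ ℂ) + C Complex.I * B.map (algebraMap ℝ ℂ)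
       = A'.map (algebraMap ℝ ℂ) + C Complex.I * B'.map (algebraMap ℝ ℂ)) :
    A = A' ∧ B = B' := by
  have key : ∀ s : σ →₀ ℕ, A.coeff s = A'.coeff s ∧ B.coeff s = B'.coeff s := by
    intro s
    have h2 := congrArg (MvPolynomial.coeff s) h
    simp only [coeff_add, coeff_map, coeff_C_mul] at h2
    have := Complex.ext_iff.1 h2
    simp at this
    exact this
  exact ⟨MvPolynomial.ext _ _ fun s => (key s).1, MvPolynomial.ext _ _ fun s => (key s).2⟩

/-- A complex polynomial invariant under every substitution from `G` lies in the
complex algebra generated by the complexified generators. -/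
lemma invariant_mem {d m : ℕ} (G : Subgroup (GL (Fin d) ℝ)) (p : Fin m → MvPolynomial (Fin d) ℝ)
    (hpgen : ∀ P, IsInv G P ↔ P ∈ Algebra.adjoin ℝ (Set.range p))
    {Q : MvPolynomial (Fin d) ℂ} (hQ : ∀ g ∈ G, sC g Q = Q) :
    Q ∈ Algebra.adjoin ℂ (Set.range fun i => (p i).map (algebraMap ℝ ℂ)) := by
  have hAB : ∀ g ∈ G, sR g (reP Q) = reP Q ∧ sR g (imP Q) = imP Q := by
    intro g hg
    apply decomp_unique
    have e1 : (sR g (reP Q)).map (algebraMap ℝ ℂ)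
        + C Complex.I * (sR g (imP Q)).map (algebraMap ℝ ℂ) = sC g Q := by
      conv_rhs => rw [decompP Q]
      rw [_root_.map_add, _root_.map_mul, ← map_sR, ← map_sR]
      have hcI : sC g (C Complex.I) = C Complex.I := by
        rw [← MvPolynomial.algebraMap_eq]
        exact AlgHom.commutes _ _
      rw [hcI]
    rw [e1, hQ g hg]
    exact decompP Q
  have hA : IsInv G (reP Q) := by
    intro g hg v
    rw [← eval_sR, (hAB g hg).1]
  have hB : IsInv G (imP Q) := by
    intro g hg v
    rw [← eval_sR, (hAB g hg).2]
  have hmap : ∀ W : MvPolynomial (Fin d) ℝ, W ∈ Algebra.adjoin ℝ (Set.range p) →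
      W.map (algebraMap ℝ ℂ) ∈ Algebra.adjoin ℂ (Set.range fun i => (p i).map (algebraMap ℝ ℂ)) := by
    intro W hW
    refine Algebra.adjoin_induction
      (p := fun x _ => x.map (algebraMap ℝ ℂ)
        ∈ Algebra.adjoin ℂ (Set.range fun i => (p i).map (algebraMap ℝ ℂ))) ?_ ?_ ?_ ?_ hW
    · rintro x ⟨i, rfl⟩
      exact Algebra.subset_adjoin ⟨i, rfl⟩
    · intro r
      rw [MvPolynomial.algebraMap_eq, MvPolynomial.map_C]
      rw [show (C (algebraMap ℝ ℂ r) : MvPolynomial (Fin d) ℂ)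
          = algebraMap ℂ (MvPolynomial (Fin d) ℂ) (algebraMap ℝ ℂ r) from rfl]
      exact Subalgebra.algebraMap_mem _ _
    · intro x y _ _ hx hy
      rw [_root_.map_add]
      exact add_mem hx hy
    · intro x y _ _ hx hy
      rw [_root_.map_mul]
      exact mul_mem hx hy
  have hQdec := decompP Q
  rw [hQdec]
  refine add_mem (hmap _ ((hpgen _).1 hA)) (mul_mem ?_ (hmap _ ((hpgen _).1 hB)))
  rw [← MvPolynomial.algebraMap_eq]
  exact Subalgebra.algebraMap_mem _ _

end Stmt15Aux
/-- the real Zariski closure `Y` of `Y₀` consists exactly of the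
real points of the complex image `Y_ℂ = p_ℂ(ℂ^d)`. -/
theorem stmt_15 (d m : ℕ) (G : Subgroup (GL (Fin d) ℝ)) [Finite G]
    (p : Fin m → MvPolynomial (Fin d) ℝ) (dd : Fin m → ℕ)
    (hphom : ∀ i, (p i).IsHomogeneous (dd i))
    (hpgen : ∀ P, IsInv G P ↔ P ∈ Algebra.adjoin ℝ (Set.range p))
    (y : Fin m → ℝ) :
    y ∈ zarClosure (Set.range (evalMap p)) ↔
      ∃ v : Fin d → ℂ, pC p v = fun i => (y i : ℂ) := by
  classical
  have hft : Fintype G := Fintype.ofFinite G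
  constructor
  · intro hy
    set fC : Fin m → MvPolynomial (Fin d) ℂ := fun i => (p i).map (algebraMap ℝ ℂ) with hfC
    set J : Ideal (MvPolynomial (Fin d) ℂ) :=
      Ideal.span (Set.range fun i => fC i - C ((y i : ℝ) : ℂ)) with hJdef
    by_cases hJ : J = ⊤
    · exfalso
      have h1 : (1 : MvPolynomial (Fin d) ℂ) ∈ J := hJ ▸ Submodule.mem_top
      rw [hJdef, Ideal.mem_span_range_iff_exists_fun] at h1
      obtain ⟨h, hh⟩ := h1
      -- invariance of the complexified generators
      have hpinv : ∀ (i : Fin m), ∀ g ∈ G, sC g (fC i) = fC i := by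
        intro i g hg
        have hR : sR g (p i) = p i := by
          apply MvPolynomial.funext
          intro v
          rw [eval_sR]
          exact (hpgen (p i)).2 (Algebra.subset_adjoin ⟨i, rfl⟩) g hg v
        rw [hfC, ← map_sR, hR]
      have hCinv : ∀ (c : ℂ), ∀ g : GL (Fin d) ℝ, sC g (C c) = C c := by
        intro c g
        rw [← MvPolynomial.algebraMap_eq]
        exact AlgHom.commutes _ _
      -- averaged coefficients
      set H : Fin m → MvPolynomial (Fin d) ℂ :=
        fun i => ∑ g : G, sC (g : GL (Fin d) ℝ) (h i) with hH
      have hHinv : ∀ (i : Fin m), ∀ g₀ ∈ G, sC g₀ (H i) = H i := by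
        intro i g₀ hg₀
        rw [hH]
        simp only
        rw [map_sum]
        refine Eq.trans (Finset.sum_congr rfl fun g _ => sC_comp (g : GL (Fin d) ℝ) g₀ (h i)) ?_
        exact Fintype.sum_equiv (Equiv.mulRight (⟨g₀, hg₀⟩ : G)) _ _ (fun g => rfl)
      have key : ∑ i, H i * (fC i - C ((y i : ℝ) : ℂ))
          = (Fintype.card G : MvPolynomial (Fin d) ℂ) := by
        have step : ∀ g : G, sC (g : GL (Fin d) ℝ) (∑ i, h i * (fC i - C ((y i : ℝ) : ℂ)))
            = ∑ i, sC (g : GL (Fin d) ℝ) (h i) * (fC i - C ((y i : ℝ) : ℂ)) := by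
          intro g
          rw [map_sum]
          refine Finset.sum_congr rfl fun i _ => ?_
          rw [_root_.map_mul, _root_.map_sub, hpinv i (g : GL (Fin d) ℝ) g.2, hCinv]
        calc ∑ i, H i * (fC i - C ((y i : ℝ) : ℂ))
            = ∑ i, ∑ g : G, sC (g : GL (Fin d) ℝ) (h i) * (fC i - C ((y i : ℝ) : ℂ)) := by
              refine Finset.sum_congr rfl fun i _ => ?_
              rw [hH, Finset.sum_mul]
          _ = ∑ g : G, ∑ i, sC (g : GL (Fin d) ℝ) (h i) * (fC i - C ((y i : ℝ) : ℂ)) :=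
              Finset.sum_comm
          _ = ∑ g : G, sC (g : GL (Fin d) ℝ) (∑ i, h i * (fC i - C ((y i : ℝ) : ℂ))) :=
              Finset.sum_congr rfl fun g _ => (step g).symm
          _ = ∑ g : G, sC (g : GL (Fin d) ℝ) 1 := by rw [hh]
          _ = (Fintype.card G : MvPolynomial (Fin d) ℂ) := by
              simp [Finset.sum_const, Finset.card_univ]
      -- H i comes from a polynomial in the generators
      have hHmem : ∀ i, ∃ q : MvPolynomial (Fin m) ℂ, aeval fC q = H i := by
        intro i
        have hmem := invariant_mem G p hpgen (hHinv i)
        rw [Algebra.adjoin_range_eq_range_aeval] at hmem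
        obtain ⟨q, hq⟩ := hmem
        exact ⟨q, hq⟩
      choose Qq hQq using hHmem
      set Rp : MvPolynomial (Fin m) ℂ := ∑ i, Qq i * (X i - C ((y i : ℝ) : ℂ)) with hRpdef
      have hRp : aeval fC Rp = (Fintype.card G : MvPolynomial (Fin d) ℂ) := by
        rw [hRpdef, map_sum]
        refine Eq.trans (Finset.sum_congr rfl fun i _ => ?_) key
        rw [_root_.map_mul, _root_.map_sub, aeval_X, aeval_C, hQq i,
          MvPolynomial.algebraMap_eq]
      -- evaluate over the real points
      have hvals : ∀ v : Fin d → ℝ,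
          ((eval (evalMap p v) (reP Rp) : ℝ) : ℂ)
            + Complex.I * ((eval (evalMap p v) (imP Rp) : ℝ) : ℂ) = (Fintype.card G : ℂ) := by
        intro v
        have h2 := congrArg (eval (fun j => ((v j : ℝ) : ℂ))) hRp
        rw [show aeval fC Rp = bind₁ fC Rp from rfl, eval_bind'] at h2
        have h3 : (fun i => eval (fun j => ((v j : ℝ) : ℂ)) (fC i))
            = fun i => ((evalMap p v i : ℝ) : ℂ) := by
          funext i
          exact eval_map_real v (p i)
        rw [h3] at h2
        rw [decompP Rp] at h2
        rw [_root_.map_add, _root_.map_mul, eval_C] at h2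
        rw [eval_map_real (evalMap p v) (reP Rp), eval_map_real (evalMap p v) (imP Rp)] at h2
        rw [map_natCast] at h2
        exact h2
      have hAgrid : ∀ s ∈ Set.range (evalMap p),
          eval s (reP Rp - (Fintype.card G : MvPolynomial (Fin m) ℝ)) = 0 := by
        rintro s ⟨v, rfl⟩
        have h4 := hvals v
        rw [Complex.ext_iff] at h4
        simp at h4
        rw [_root_.map_sub, map_natCast]
        rw [h4.1]
        ring
      have hBgrid : ∀ s ∈ Set.range (evalMap p), eval s (imP Rp) = 0 := by
        rintro s ⟨v, rfl⟩
        have h4 := hvals v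
        rw [Complex.ext_iff] at h4
        simp at h4
        exact h4.2
      have hAy := hy _ hAgrid
      have hBy := hy _ hBgrid
      rw [_root_.map_sub, map_natCast, sub_eq_zero] at hAy
      -- evaluate Rp at the (complexified) point y
      have hz : eval (fun i => ((y i : ℝ) : ℂ)) Rp = 0 := by
        rw [hRpdef, map_sum]
        refine Finset.sum_eq_zero fun i _ => ?_
        simp
      have hz2 : eval (fun i => ((y i : ℝ) : ℂ)) Rp = (Fintype.card G : ℂ) := by
        rw [decompP Rp, _root_.map_add, _root_.map_mul, eval_C]
        rw [eval_map_real y (reP Rp), eval_map_real y (imP Rp)]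
        rw [hAy, hBy]
        simp
      rw [hz] at hz2
      have hcard : (Fintype.card G : ℂ) ≠ 0 := by
        exact_mod_cast Nat.cast_ne_zero.2 Fintype.card_ne_zero
      exact hcard hz2.symm
    · -- the ideal is proper: use the Nullstellensatz
      have hne : MvPolynomial.zeroLocus ℂ J ≠ ∅ := by
        intro hempty
        have hrad := MvPolynomial.vanishingIdeal_zeroLocus_eq_radical (K := ℂ) J
        rw [hempty, MvPolynomial.vanishingIdeal_empty] at hrad
        exact hJ (Ideal.radical_eq_top.1 hrad.symm)
      obtain ⟨v, hv⟩ := Set.nonempty_iff_ne_empty.2 hne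
      refine ⟨v, ?_⟩
      funext i
      have h5 := hv _ (Ideal.subset_span ⟨i, rfl⟩)
      rw [_root_.map_sub, aeval_C, Algebra.algebraMap_self, RingHom.id_apply, sub_eq_zero] at h5
      exact h5
  · rintro ⟨v, hv⟩ P hP
    have hz : bind₁ p P = 0 := by
      apply MvPolynomial.funext
      intro w
      rw [eval_bind', map_zero]
      exact hP _ ⟨w, rfl⟩
    have hzC := congrArg (MvPolynomial.map (algebraMap ℝ ℂ)) hz
    rw [MvPolynomial.map_bind₁, map_zero] at hzC
    have h2 := congrArg (eval v) hzC
    rw [eval_bind', map_zero] at h2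
    have h3 : (fun i => eval v ((MvPolynomial.map (algebraMap ℝ ℂ)) (p i)))
        = fun i => ((y i : ℝ) : ℂ) := hv
    rw [h3] at h2
    rw [eval_map_real y P] at h2
    exact_mod_cast h2
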